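/- Let W be an n × n complex matrix whose columns consist of a₁ copies of a vector v₁, a₂ copies of v₂, …, a_k copies of v_k, where v₁,…,v_k are pairwise orthogonal in ℂⁿ with the standard inner product and a₁+⋯+a_k = n. Then |per W| ≤ (a₁!⋯a_k! / (a₁^{a₁/2}⋯a_k^{a_k/2})) · ‖v₁‖^{a₁}⋯‖v_k‖^{a_k}, where per W denotes the permanent of W. -/

import Mathlib

open Finset

lemma root_sum (N : ℕ) (hN : N ≠ 0) (d : ℤ) :
    ∑ j ∈ Finset.range N, (Complex.exp (2*Real.pi*Complex.I/N)) ^ ((j:ℤ) * d)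
      = if (N:ℤ) ∣ d then (N:ℂ) else 0 := by
  have hprim := Complex.isPrimitiveRoot_exp N hN
  set ω := Complex.exp (2*Real.pi*Complex.I/N) with hωdef
  have key : ∀ j : ℕ, ω ^ ((j:ℤ)*d) = (ω ^ d)^j := by
    intro j; rw [mul_comm, zpow_mul, zpow_natCast]
  simp_rw [key]
  by_cases hdvd : (N:ℤ) ∣ d
  · rw [if_pos hdvd]
    have h1 : ω ^ d = 1 := (hprim.zpow_eq_one_iff_dvd d).2 hdvd
    simp [h1]
  · rw [if_neg hdvd]
    have hz : ω ^ d ≠ 1 := fun h => hdvd ((hprim.zpow_eq_one_iff_dvd d).1 h)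
    rw [geom_sum_eq hz]
    have h2 : (ω ^ d) ^ N = 1 := by
      rw [← zpow_natCast, ← zpow_mul, mul_comm, zpow_mul, zpow_natCast,
        hprim.pow_eq_one, one_zpow]
    rw [h2]; simp

lemma amgm_prod_le_one {n : ℕ} (hn : n ≠ 0) (y : Fin n → ℝ) (hy : ∀ i, 0 ≤ y i)
    (hs : ∑ i, y i ≤ n) : ∏ i, y i ≤ 1 := by
  have hn' : (0:ℝ) < n := by positivity
  have h := Real.geom_mean_le_arith_mean_weighted univ (fun _ => (n:ℝ)⁻¹) y
    (fun i _ => by positivity) (by simp [Finset.card_univ]; field_simp) (fun i _ => hy i)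
  have h1 : ∑ i, (n:ℝ)⁻¹ * y i ≤ 1 := by
    rw [← Finset.mul_sum]
    rw [inv_mul_le_iff₀ hn']
    linarith
  have h2 : ∏ i, y i ^ ((n:ℝ)⁻¹) ≤ 1 := le_trans h h1
  have h3 : (∏ i, y i ^ ((n:ℝ)⁻¹)) ^ n ≤ 1 :=
    pow_le_one₀ (Finset.prod_nonneg fun i _ => Real.rpow_nonneg (hy i) _) h2
  calc ∏ i, y i = ∏ i, (y i ^ ((n:ℝ)⁻¹)) ^ n := by
        refine Finset.prod_congr rfl fun i _ => ?_
        rw [← Real.rpow_natCast (y i ^ ((n:ℝ)⁻¹)) n, ← Real.rpow_mul (hy i),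
          inv_mul_cancel₀ (ne_of_gt hn'), Real.rpow_one]
    _ = (∏ i, y i ^ ((n:ℝ)⁻¹)) ^ n := by rw [Finset.prod_pow]
    _ ≤ 1 := h3

lemma sqrt_pow' (x : ℝ) (hx : 0 ≤ x) (m : ℕ) : Real.sqrt (x ^ m) = Real.sqrt x ^ m := by
  have h : (Real.sqrt x ^ m) ^ 2 = x ^ m := by
    rw [← pow_mul, mul_comm, pow_mul, Real.sq_sqrt hx]
  rw [← h, Real.sqrt_sq (pow_nonneg (Real.sqrt_nonneg x) m)]

lemma count_perm {n k : ℕ} (c f : Fin n → Fin k) (a : Fin k → ℕ)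
    (hc : ∀ l, (univ.filter fun j => c j = l).card = a l)
    (hf : ∀ l, (univ.filter fun j => f j = l).card = a l) :
    (univ.filter fun σ : Equiv.Perm (Fin n) => c ∘ σ = f).card
      = ∏ l, (a l).factorial := by
  rw [← Fintype.card_subtype]
  have E : {σ : Equiv.Perm (Fin n) // c ∘ σ = f}
      ≃ (∀ l, {i // f i = l} ≃ {j // c j = l}) := by
    refine
      { toFun := fun σ l => Equiv.subtypeEquiv σ.1 (fun i => ?_)
        invFun := fun e => ⟨Equiv.ofFiberEquiv e, funext fun i => Equiv.ofFiberEquiv_map e i⟩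
        left_inv := ?_
        right_inv := ?_ }
    · have := congrFun σ.2 i
      simp only [Function.comp_apply] at this
      rw [this]
    · rintro ⟨σ, hσ⟩
      ext i
      simp [Equiv.ofFiberEquiv]
    · intro e
      funext l
      ext ⟨i, hi⟩
      subst hi
      simp [Equiv.ofFiberEquiv, Equiv.subtypeEquiv, Equiv.sigmaFiberEquiv]
  rw [Fintype.card_congr E, Fintype.card_pi]
  refine Finset.prod_congr rfl fun l _ => ?_
  have hcard : Fintype.card {i // f i = l} = Fintype.card {j // c j = l} := by
    rw [Fintype.card_subtype, Fintype.card_subtype, hc, hf]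
  rw [Fintype.card_equiv (Fintype.equivOfCardEq hcard), Fintype.card_subtype, hf]

lemma perm_decomp {n k : ℕ} (v : Fin k → EuclideanSpace ℂ (Fin n))
    (a : Fin k → ℕ) (c : Fin n → Fin k)
    (hc : ∀ i, (Finset.univ.filter fun x => c x = i).card = a i)
    (W : Matrix (Fin n) (Fin n) ℂ) (hW : ∀ x j, W x j = v (c j) x) :
    W.permanent = (∏ l, ((a l).factorial : ℂ)) *
      ∑ f ∈ (univ.filter fun f : Fin n → Fin k =>
          ∀ l, (univ.filter fun i => f i = l).card = a l), ∏ i, v (f i) i := by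
  classical
  have hfib : ∀ (σ : Equiv.Perm (Fin n)) l,
      (univ.filter fun i => c (σ i) = l).card = a l := by
    intro σ l
    rw [← hc l, ← Fintype.card_subtype, ← Fintype.card_subtype]
    exact Fintype.card_congr (Equiv.subtypeEquiv σ (fun i => Iff.rfl))
  have h1 : W.permanent = ∑ σ : Equiv.Perm (Fin n), ∏ i, v (c (σ i)) i := by
    rw [Matrix.permanent]
    have he : ∀ σ : Equiv.Perm (Fin n), ∏ i, W (σ i) i = ∏ i, v (c i) (σ i) := by
      intro σ; simp_rw [hW]
    simp_rw [he]
    apply Fintype.sum_equiv (Equiv.inv (Equiv.Perm (Fin n)))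
    intro σ
    simp only [Equiv.inv_apply]
    rw [← Equiv.prod_comp σ (fun i => v (c (σ⁻¹ i)) i)]
    simp
  rw [h1, ← Finset.sum_fiberwise univ (fun σ : Equiv.Perm (Fin n) => c ∘ σ)
    (fun σ => ∏ i, v (c (σ i)) i)]
  have h2 : ∀ f : Fin n → Fin k,
      ∑ σ ∈ univ.filter (fun σ : Equiv.Perm (Fin n) => c ∘ σ = f), ∏ i, v (c (σ i)) i
        = (univ.filter fun σ : Equiv.Perm (Fin n) => c ∘ σ = f).card • ∏ i, v (f i) i := by
    intro f
    rw [← Finset.sum_const]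
    refine Finset.sum_congr rfl fun σ hσ => ?_
    rw [Finset.mem_filter] at hσ
    exact Finset.prod_congr rfl fun i _ => by rw [show c (σ i) = f i from congrFun hσ.2 i]
  simp_rw [h2]
  have h3 : ∀ f : Fin n → Fin k,
      (univ.filter fun σ : Equiv.Perm (Fin n) => c ∘ σ = f).card
        = if (∀ l, (univ.filter fun i => f i = l).card = a l) then ∏ l, (a l).factorial
          else 0 := by
    intro f
    split_ifs with hcond
    · exact count_perm c f a hc hcond
    · rw [Finset.card_eq_zero, Finset.filter_eq_empty_iff]
      intro σ _ hσf
      exact hcond fun l => by rw [← hσf]; exact hfib σ l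
  simp_rw [h3, nsmul_eq_mul, Nat.cast_ite, Nat.cast_prod, Nat.cast_zero, ite_mul,
    zero_mul, ← Finset.sum_filter, Finset.mul_sum]

lemma extraction {n k N : ℕ} (hN : n < N) (v : Fin k → EuclideanSpace ℂ (Fin n))
    (a : Fin k → ℕ) (ha : ∑ l, a l = n) (s : Fin k → ℝ) :
    ∑ t ∈ Fintype.piFinset (fun _ : Fin k => Finset.range N),
        (∏ l, (Complex.exp (2*Real.pi*Complex.I/N)) ^ (-((t l : ℤ) * (a l : ℤ)))) *
          ∏ i, (∑ l, (s l : ℂ) * (Complex.exp (2*Real.pi*Complex.I/N)) ^ (t l) * v l i)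
      = (N : ℂ)^k * (∏ l, (s l : ℂ)^(a l)) *
          ∑ f ∈ (univ.filter fun f : Fin n → Fin k =>
            ∀ l, (univ.filter fun i => f i = l).card = a l), ∏ i, v (f i) i := by
  classical
  set ω : ℂ := Complex.exp (2*Real.pi*Complex.I/N) with hω
  have hω0 : ω ≠ 0 := Complex.exp_ne_zero _
  set m : (Fin n → Fin k) → Fin k → ℕ :=
    fun f l => (univ.filter fun i => f i = l).card with hm
  set G : (Fin n → Fin k) → ℂ := fun f => ∏ i, v (f i) i with hG
  have hmn : ∀ f l, m f l ≤ n := by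
    intro f l
    simpa using Finset.card_filter_le univ (fun i => f i = l)
  have han : ∀ l, a l ≤ n := by
    intro l
    rw [← ha]
    exact Finset.single_le_sum (fun _ _ => Nat.zero_le _) (Finset.mem_univ l)
  -- step 1: expand the product over i into a sum over f
  have step1 : ∀ t : Fin k → ℕ,
      (∏ l, ω ^ (-((t l : ℤ) * (a l : ℤ)))) *
          ∏ i, (∑ l, (s l : ℂ) * ω ^ (t l) * v l i)
        = ∑ f : Fin n → Fin k,
            ((∏ l, (s l:ℂ)^(m f l)) * (∏ l, ω ^ ((t l:ℤ) * ((m f l:ℤ) - (a l:ℤ))))) * G f := by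
    intro t
    rw [Fintype.prod_sum (fun i l => (s l : ℂ) * ω ^ (t l) * v l i), Finset.mul_sum]
    refine Fintype.sum_congr _ _ fun f => ?_
    have hsplit : ∏ i, ((s (f i) : ℂ) * ω ^ (t (f i)) * v (f i) i)
        = (∏ i, ((s (f i) : ℂ) * ω ^ (t (f i)))) * G f := by
      rw [hG, ← Finset.prod_mul_distrib]
    have hfiber : ∏ i, ((s (f i) : ℂ) * ω ^ (t (f i)))
        = ∏ l, ((s l : ℂ) * ω ^ (t l)) ^ (m f l) := by
      rw [← Finset.prod_fiberwise univ f (fun i => (s (f i) : ℂ) * ω ^ (t (f i)))]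
      refine Fintype.prod_congr _ _ fun l => ?_
      rw [Finset.prod_congr rfl (fun i hi => ?_), Finset.prod_const, hm]
      rw [Finset.mem_filter] at hi
      rw [hi.2]
    rw [hsplit, hfiber, ← mul_assoc, ← Finset.prod_mul_distrib]
    congr 1
    rw [← Finset.prod_mul_distrib]
    refine Fintype.prod_congr _ _ fun l => ?_
    rw [mul_pow, ← pow_mul, ← zpow_natCast ω (t l * m f l),
      show (t l:ℤ) * ((m f l:ℤ) - (a l:ℤ)) = -((t l:ℤ) * (a l:ℤ)) + ((t l * m f l : ℕ) : ℤ) by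
        push_cast; ring,
      zpow_add₀ hω0]
    ring
  simp_rw [step1]
  rw [Finset.sum_comm]
  -- step 2: evaluate the inner sum over t
  have step2 : ∀ f : Fin n → Fin k,
      ∑ t ∈ Fintype.piFinset (fun _ : Fin k => Finset.range N),
          ∏ l, ω ^ ((t l:ℤ) * ((m f l:ℤ) - (a l:ℤ)))
        = if (∀ l, m f l = a l) then (N:ℂ)^k else 0 := by
    intro f
    rw [← Finset.prod_univ_sum (fun _ => Finset.range N)
      (fun l j => ω ^ ((j:ℤ) * ((m f l:ℤ) - (a l:ℤ))))]
    have : ∀ l, ∑ j ∈ Finset.range N, ω ^ ((j:ℤ) * ((m f l:ℤ) - (a l:ℤ)))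
        = if ((N:ℤ) ∣ ((m f l:ℤ) - (a l:ℤ))) then (N:ℂ) else 0 :=
      fun l => root_sum N (by omega) _
    simp_rw [this]
    have hdvd : ∀ l, ((N:ℤ) ∣ ((m f l:ℤ) - (a l:ℤ))) ↔ m f l = a l := by
      intro l
      constructor
      · intro hd
        by_contra hne
        have h1 : ((m f l:ℤ) - (a l:ℤ)) ≠ 0 := by
          intro h; exact hne (by omega)
        have h2 := Int.le_of_dvd (abs_pos.mpr h1) ((dvd_abs _ _).mpr hd)
        have h3 : |(m f l:ℤ) - (a l:ℤ)| < N := by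
          have := hmn f l; have := han l
          rw [abs_lt]; constructor <;> omega
        omega
      · intro h; rw [h]; simp
    by_cases hall : ∀ l, m f l = a l
    · rw [if_pos hall]
      rw [Finset.prod_congr rfl (fun l _ => if_pos ((hdvd l).mpr (hall l)))]
      simp
    · rw [if_neg hall]
      obtain ⟨l, hl⟩ := not_forall.mp hall
      exact Finset.prod_eq_zero (Finset.mem_univ l)
        (by rw [if_neg (fun hd => hl ((hdvd l).mp hd))])
  -- step 3: pull out constants and collapse the sum over f
  have step3 : ∀ f : Fin n → Fin k,
      ∑ t ∈ Fintype.piFinset (fun _ : Fin k => Finset.range N),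
          ((∏ l, (s l:ℂ)^(m f l)) * (∏ l, ω ^ ((t l:ℤ) * ((m f l:ℤ) - (a l:ℤ))))) * G f
        = (if (∀ l, m f l = a l) then (N:ℂ)^k else 0) * (∏ l, (s l:ℂ)^(m f l)) * G f := by
    intro f
    rw [← step2 f]
    rw [← Finset.sum_mul, ← Finset.mul_sum]
    ring
  simp_rw [step3]
  rw [Finset.sum_congr rfl (fun f _ => by rw [ite_mul, zero_mul, ite_mul, zero_mul]),
    ← Finset.sum_filter]
  rw [Finset.mul_sum]
  refine Finset.sum_congr rfl fun f hf => ?_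
  rw [Finset.mem_filter] at hf
  rw [show ∏ l, (s l:ℂ) ^ (m f l) = ∏ l, (s l:ℂ) ^ (a l) from
    Fintype.prod_congr _ _ fun l => by rw [show m f l = a l from hf.2 l]]

lemma pyth {n k : ℕ} (v : Fin k → EuclideanSpace ℂ (Fin n))
    (hv : ∀ i j, i ≠ j → (inner ℂ (v i) (v j) : ℂ) = 0)
    (x : Fin k → ℂ) :
    ∑ i, ‖∑ l, x l * v l i‖^2 = ∑ l, ‖x l‖^2 * ‖v l‖^2 := by
  have hsq : ∀ z : ℂ, ((‖z‖^2 : ℝ) : ℂ) = z * (starRingEnd ℂ) z := by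
    intro z
    rw [Complex.mul_conj, Complex.normSq_eq_norm_sq]
  have hin : ∀ l m' : Fin k, ∑ i, v l i * (starRingEnd ℂ) (v m' i)
      = (inner ℂ (v m') (v l) : ℂ) := by
    intro l m'
    rw [PiLp.inner_apply]
    exact Fintype.sum_congr _ _ fun i => by rw [RCLike.inner_apply]
  have key : ∑ i, ((‖∑ l, x l * v l i‖^2 : ℝ) : ℂ)
      = ∑ l, ((‖x l‖^2 * ‖v l‖^2 : ℝ) : ℂ) := by
    simp_rw [hsq]
    calc ∑ i, (∑ l, x l * v l i) * (starRingEnd ℂ) (∑ l, x l * v l i)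
        = ∑ i, ∑ l, ∑ m', (x l * v l i) * ((starRingEnd ℂ) (x m') * (starRingEnd ℂ) (v m' i)) := by
          refine Fintype.sum_congr _ _ fun i => ?_
          rw [map_sum, Finset.sum_mul_sum]
          refine Finset.sum_congr rfl fun l _ => Finset.sum_congr rfl fun m' _ => by
            rw [map_mul]
      _ = ∑ l, ∑ m', (x l * (starRingEnd ℂ) (x m')) * ∑ i, v l i * (starRingEnd ℂ) (v m' i) := by
          rw [Finset.sum_comm]
          refine Finset.sum_congr rfl fun l _ => ?_
          rw [Finset.sum_comm]
          refine Finset.sum_congr rfl fun m' _ => ?_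
          rw [Finset.mul_sum]
          exact Finset.sum_congr rfl fun i _ => by ring
      _ = ∑ l, (x l * (starRingEnd ℂ) (x l)) * (inner ℂ (v l) (v l) : ℂ) := by
          refine Finset.sum_congr rfl fun l _ => ?_
          rw [Finset.sum_eq_single l]
          · rw [hin]
          · intro m' _ hm'
            rw [hin, hv m' l hm', mul_zero]
          · intro h; exact absurd (Finset.mem_univ l) h
      _ = ∑ l, ((‖x l‖^2 * ‖v l‖^2 : ℝ) : ℂ) := by
          refine Finset.sum_congr rfl fun l _ => ?_
          rw [← hsq, inner_self_eq_norm_sq_to_K]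
          push_cast
          norm_num
  exact_mod_cast key

lemma S_bound {n k : ℕ} (hn : n ≠ 0) (v : Fin k → EuclideanSpace ℂ (Fin n))
    (hv : ∀ i j, i ≠ j → (inner ℂ (v i) (v j) : ℂ) = 0)
    (a : Fin k → ℕ) (ha : ∑ l, a l = n)
    (hz : ∀ l, a l ≠ 0 → v l ≠ 0) :
    ‖∑ f ∈ (univ.filter fun f : Fin n → Fin k =>
        ∀ l, (univ.filter fun i => f i = l).card = a l), ∏ i, v (f i) i‖
      ≤ ∏ l, ‖v l‖ ^ (a l) / Real.sqrt ((a l : ℝ) ^ (a l)) := by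
  classical
  set s : Fin k → ℝ := fun l => Real.sqrt (a l) / ‖v l‖ with hs_def
  have hs_nonneg : ∀ l, 0 ≤ s l :=
    fun l => div_nonneg (Real.sqrt_nonneg _) (norm_nonneg _)
  have hs_sq : ∀ l, (s l)^2 * ‖v l‖^2 = a l := by
    intro l
    by_cases h : a l = 0
    · simp [hs_def, h]
    · have hvl : ‖v l‖ ≠ 0 := norm_ne_zero_iff.mpr (hz l h)
      rw [hs_def]
      rw [div_pow, div_mul_eq_mul_div, Real.sq_sqrt (Nat.cast_nonneg _),
        mul_div_assoc, div_self (by positivity), mul_one]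
  have hA := extraction (Nat.lt_succ_self n) v a ha s
  have hωn : ‖Complex.exp (2*Real.pi*Complex.I/((n+1 : ℕ):ℂ))‖ = 1 := by
    have hprim := Complex.isPrimitiveRoot_exp (n+1) (Nat.succ_ne_zero n)
    have hpow : (Complex.exp (2*Real.pi*Complex.I/((n+1 : ℕ):ℂ)))^(n+1) = 1 :=
      hprim.pow_eq_one
    have h2 : ‖Complex.exp (2*Real.pi*Complex.I/((n+1 : ℕ):ℂ))‖^(n+1) = 1 := by
      rw [← norm_pow, hpow, norm_one]
    set x := ‖Complex.exp (2*Real.pi*Complex.I/((n+1 : ℕ):ℂ))‖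
    have hx : 0 ≤ x := norm_nonneg _
    rcases lt_trichotomy x 1 with h1|h1|h1
    · have := pow_lt_one₀ hx h1 (show n+1 ≠ 0 by omega); linarith
    · exact h1
    · have := one_lt_pow₀ h1 (show n+1 ≠ 0 by omega); linarith
  -- bound on each summand
  have hX : ∀ t : Fin k → ℕ,
      ‖∏ i, (∑ l, (s l : ℂ) * (Complex.exp (2*Real.pi*Complex.I/((n+1 : ℕ):ℂ))) ^ (t l) * v l i)‖
        ≤ 1 := by
    intro t
    rw [norm_prod]
    have hsum : ∑ i, ‖∑ l, ((s l : ℂ) * (Complex.exp (2*Real.pi*Complex.I/((n+1 : ℕ):ℂ))) ^ (t l)) * v l i‖^2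
        = (n : ℝ) := by
      rw [pyth v hv (fun l => (s l : ℂ) * (Complex.exp (2*Real.pi*Complex.I/((n+1 : ℕ):ℂ))) ^ (t l))]
      have : ∀ l, ‖(s l : ℂ) * (Complex.exp (2*Real.pi*Complex.I/((n+1 : ℕ):ℂ))) ^ (t l)‖^2 * ‖v l‖^2
          = (a l : ℝ) := by
        intro l
        rw [norm_mul, norm_pow, hωn, one_pow, mul_one, Complex.norm_real,
          Real.norm_eq_abs, abs_of_nonneg (hs_nonneg l)]
        exact hs_sq l
      rw [Fintype.sum_congr _ _ this]
      exact_mod_cast ha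
    have h1 : ∏ i, ‖∑ l, ((s l : ℂ) * (Complex.exp (2*Real.pi*Complex.I/((n+1 : ℕ):ℂ))) ^ (t l)) * v l i‖^2 ≤ 1 := by
      refine amgm_prod_le_one hn _ (fun i => sq_nonneg _) ?_
      rw [hsum]
    rw [Finset.prod_pow] at h1
    exact (pow_le_one_iff_of_nonneg
      (Finset.prod_nonneg fun i _ => norm_nonneg _) two_ne_zero).mp h1
  have hT : ∀ t : Fin k → ℕ,
      ‖(∏ l, (Complex.exp (2*Real.pi*Complex.I/((n+1 : ℕ):ℂ))) ^ (-((t l : ℤ) * (a l : ℤ)))) *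
        ∏ i, (∑ l, (s l : ℂ) * (Complex.exp (2*Real.pi*Complex.I/((n+1 : ℕ):ℂ))) ^ (t l) * v l i)‖ ≤ 1 := by
    intro t
    rw [norm_mul]
    have hpref : ‖∏ l, (Complex.exp (2*Real.pi*Complex.I/((n+1 : ℕ):ℂ))) ^ (-((t l : ℤ) * (a l : ℤ)))‖ = 1 := by
      rw [norm_prod]
      rw [Finset.prod_congr rfl (fun l _ => by rw [norm_zpow, hωn, one_zpow])]
      exact Finset.prod_const_one
    rw [hpref, one_mul]
    exact hX t
  have key : ‖((n+1 : ℕ) : ℂ)^k * (∏ l, (s l : ℂ)^(a l)) *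
      ∑ f ∈ (univ.filter fun f : Fin n → Fin k =>
        ∀ l, (univ.filter fun i => f i = l).card = a l), ∏ i, v (f i) i‖
      ≤ ((n+1 : ℕ) : ℝ)^k := by
    rw [← hA]
    refine le_trans (norm_sum_le _ _) ?_
    refine le_trans (Finset.sum_le_sum (fun t _ => hT t)) ?_
    rw [Finset.sum_const, Fintype.card_piFinset]
    simp
  rw [norm_mul, norm_mul, norm_pow, Complex.norm_natCast] at key
  have hCnorm : ‖∏ l, (s l : ℂ)^(a l)‖ = ∏ l, (s l)^(a l) := by
    rw [norm_prod]
    refine Finset.prod_congr rfl fun l _ => ?_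
    rw [norm_pow, Complex.norm_real, Real.norm_eq_abs, abs_of_nonneg (hs_nonneg l)]
  rw [hCnorm] at key
  have hPpos : 0 < ∏ l, (s l)^(a l) := by
    refine Finset.prod_pos fun l _ => ?_
    by_cases h : a l = 0
    · rw [h, pow_zero]; norm_num
    · have hvl : v l ≠ 0 := hz l h
      have : 0 < s l := by
        rw [hs_def]
        have h1 : 0 < Real.sqrt (a l) := Real.sqrt_pos.mpr (by positivity)
        have h2 : 0 < ‖v l‖ := norm_pos_iff.mpr hvl
        positivity
      positivity
  have hNpos : (0:ℝ) < ((n+1 : ℕ) : ℝ)^k := by positivity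
  have hPS : (∏ l, (s l)^(a l)) * ‖∑ f ∈ (univ.filter fun f : Fin n → Fin k =>
      ∀ l, (univ.filter fun i => f i = l).card = a l), ∏ i, v (f i) i‖ ≤ 1 := by
    rw [mul_assoc] at key
    nlinarith [key, hNpos]
  have hfinal : ‖∑ f ∈ (univ.filter fun f : Fin n → Fin k =>
      ∀ l, (univ.filter fun i => f i = l).card = a l), ∏ i, v (f i) i‖
      ≤ (∏ l, (s l)^(a l))⁻¹ := by
    rw [inv_eq_one_div, le_div_iff₀ hPpos, mul_comm]
    exact hPS
  have hPinv : (∏ l, (s l)^(a l))⁻¹ = ∏ l, ‖v l‖ ^ (a l) / Real.sqrt ((a l : ℝ) ^ (a l)) := by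
    rw [← Finset.prod_inv_distrib]
    refine Finset.prod_congr rfl fun l _ => ?_
    rw [show s l = Real.sqrt (a l) / ‖v l‖ from rfl, div_pow,
      ← sqrt_pow' _ (Nat.cast_nonneg _), inv_div]
  exact hPinv ▸ hfinal

open Finset in
/-- Permanent bound for matrices with orthogonal repeated columns: if the
columns of the `n × n` matrix `W` consist of `aᵢ` copies of `vᵢ` for pairwise
orthogonal vectors `v₁,…,v_k ∈ ℂⁿ` with `a₁+⋯+a_k = n`, then
`|per W| ≤ (∏ᵢ aᵢ!/aᵢ^{aᵢ/2}) ∏ᵢ ‖vᵢ‖^{aᵢ}`. -/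
theorem stmt_13 {n k : ℕ} (v : Fin k → EuclideanSpace ℂ (Fin n))
    (hv : ∀ i j, i ≠ j → (inner ℂ (v i) (v j) : ℂ) = 0)
    (a : Fin k → ℕ) (ha : ∑ i, a i = n)
    (c : Fin n → Fin k)
    (hc : ∀ i, (Finset.univ.filter fun x => c x = i).card = a i)
    (W : Matrix (Fin n) (Fin n) ℂ) (hW : ∀ x j, W x j = v (c j) x) :
    ‖W.permanent‖
      ≤ (∏ i, ((a i).factorial : ℝ) / Real.sqrt ((a i : ℝ) ^ (a i))) *
          ∏ i, ‖v i‖ ^ (a i) := by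
  classical
  by_cases hn : n = 0
  · subst hn
    have ha0 : ∀ l, a l = 0 := by
      intro l
      exact Finset.sum_eq_zero_iff.mp ha l (Finset.mem_univ l)
    have hper : W.permanent = 1 := by
      rw [Matrix.permanent]; simp
    rw [hper, norm_one]
    have h1 : (∏ i, ((a i).factorial : ℝ) / Real.sqrt ((a i : ℝ) ^ (a i))) = 1 := by
      have hh : ∀ l ∈ univ, ((a l).factorial : ℝ) / Real.sqrt ((a l : ℝ) ^ (a l)) = 1 :=
        fun l _ => by rw [ha0 l]; simp
      rw [Finset.prod_congr rfl hh, Finset.prod_const_one]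
    have h2 : (∏ i, ‖v i‖ ^ (a i)) = 1 := by
      have hh : ∀ l ∈ univ, ‖v l‖ ^ (a l) = 1 := fun l _ => by rw [ha0 l, pow_zero]
      rw [Finset.prod_congr rfl hh, Finset.prod_const_one]
    rw [h1, h2, mul_one]
  by_cases hzz : ∃ l, a l ≠ 0 ∧ v l = 0
  · obtain ⟨l0, hl0, hv0⟩ := hzz
    have hper : W.permanent = 0 := by
      have hcard : 0 < (univ.filter fun x => c x = l0).card := by
        rw [hc]; omega
      obtain ⟨j0, hj0⟩ := Finset.card_pos.mp hcard
      have hj0' : c j0 = l0 := (Finset.mem_filter.mp hj0).2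
      rw [Matrix.permanent]
      refine Finset.sum_eq_zero fun σ _ => ?_
      refine Finset.prod_eq_zero (Finset.mem_univ j0) ?_
      rw [hW, hj0', hv0]
      rfl
    rw [hper, norm_zero]
    have h2 : (∏ i, ‖v i‖ ^ (a i)) = 0 :=
      Finset.prod_eq_zero (Finset.mem_univ l0) (by rw [hv0, norm_zero, zero_pow hl0])
    rw [h2, mul_zero]
  push_neg at hzz
  rw [perm_decomp v a c hc W hW, norm_mul]
  have hfac : ‖(∏ l, ((a l).factorial : ℂ))‖ = ∏ l, ((a l).factorial : ℝ) := by
    rw [norm_prod]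
    exact Finset.prod_congr rfl fun l _ => Complex.norm_natCast _
  rw [hfac]
  have hS := S_bound hn v hv a ha hzz
  refine le_trans (mul_le_mul_of_nonneg_left hS
    (Finset.prod_nonneg fun l _ => Nat.cast_nonneg _)) (le_of_eq ?_)
  rw [← Finset.prod_mul_distrib, ← Finset.prod_mul_distrib]
  exact Finset.prod_congr rfl fun l _ => by ring
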